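/- The set ⋃_{2 ≤ n < ω} L(n) of bounded non-convergent sequences with finitely many accumulation points is not spaceable in ℓ∞: there is no closed infinite-dimensional linear subspace Y of ℓ∞ such that every non-zero element of Y has finitely many accumulation points but is not convergent. -/

import Mathlib

open Filter Topology Set

/-- The set of accumulation points of a real sequence. -/
def AccPts (x : ℕ → ℝ) : Set ℝ := {η | ∀ ε > 0, {n : ℕ | |x n - η| < ε}.Infinite}

/-- The Banach space `ℓ∞` of bounded real sequences. -/
noncomputable abbrev linf : Type := lp (fun _ : ℕ => ℝ) ⊤

namespace Stmt16Aux

/-- The limit of a bounded sequence along an ultrafilter. -/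
noncomputable def lam (U : Ultrafilter ℕ) (x : linf) : ℝ := limUnder (U : Filter ℕ) ⇑x

lemma apply_le_norm (x : linf) (n : ℕ) : |x n| ≤ ‖x‖ := by
  rw [← Real.norm_eq_abs]
  exact lp.norm_apply_le_norm ENNReal.top_ne_zero x n

lemma tendsto_lam (U : Ultrafilter ℕ) (x : linf) :
    Tendsto ⇑x (U : Filter ℕ) (𝓝 (lam U x)) := by
  obtain ⟨a, -, ha⟩ := (isCompact_Icc (a := -‖x‖) (b := ‖x‖)).ultrafilter_le_nhds
    (U.map ⇑x) (by
      rw [le_principal_iff]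
      exact Filter.mem_map.2 (univ_mem' fun n => abs_le.1 (apply_le_norm x n)))
  have ht : Tendsto ⇑x (U : Filter ℕ) (𝓝 a) := ha
  rw [lam, ht.limUnder_eq]
  exact ht

lemma lam_eq {U : Ultrafilter ℕ} {x : linf} {a : ℝ}
    (h : Tendsto ⇑x (U : Filter ℕ) (𝓝 a)) : lam U x = a :=
  tendsto_nhds_unique (tendsto_lam U x) h

lemma lam_add (U : Ultrafilter ℕ) (x y : linf) : lam U (x + y) = lam U x + lam U y := by
  refine lam_eq ?_
  have h := (tendsto_lam U x).add (tendsto_lam U y)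
  rw [lp.coeFn_add]
  exact h

lemma lam_smul (U : Ultrafilter ℕ) (c : ℝ) (x : linf) : lam U (c • x) = c * lam U x := by
  refine lam_eq ?_
  rw [lp.coeFn_smul]
  have h := (tendsto_lam U x).const_smul c
  exact h

lemma lam_zero (U : Ultrafilter ℕ) : lam U 0 = 0 := by
  refine lam_eq ?_
  rw [lp.coeFn_zero]
  exact tendsto_const_nhds

lemma abs_lam_sub_le (U : Ultrafilter ℕ) (x y : linf) : |lam U x - lam U y| ≤ ‖x - y‖ := by
  have h : Tendsto (fun n => |x n - y n|) (U : Filter ℕ) (𝓝 |lam U x - lam U y|) :=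
    ((tendsto_lam U x).sub (tendsto_lam U y)).abs
  refine le_of_tendsto h (Eventually.of_forall fun n => ?_)
  have h2 := apply_le_norm (x - y) n
  rwa [lp.coeFn_sub] at h2

/-- The ultrafilter limit as a linear map. -/
noncomputable def lamL (U : Ultrafilter ℕ) : linf →ₗ[ℝ] ℝ where
  toFun := lam U
  map_add' := lam_add U
  map_smul' := lam_smul U

lemma mem_accPts {U : Ultrafilter ℕ} (hU : (U : Filter ℕ) ≤ atTop) (x : linf) :
    lam U x ∈ AccPts ⇑x := by
  intro ε hε
  have h1 : {n | |x n - lam U x| < ε} ∈ (U : Filter ℕ) := by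
    have h := Metric.tendsto_nhds.1 (tendsto_lam U x) ε hε
    exact h
  by_contra hfin
  rw [Set.not_infinite] at hfin
  have h2 : {n | |x n - lam U x| < ε}ᶜ ∈ (U : Filter ℕ) := by
    refine hU ?_
    rw [← Nat.cofinite_eq_atTop]
    exact hfin.compl_mem_cofinite
  have h3 := inter_mem h1 h2
  rw [inter_compl_self] at h3
  exact (U : Filter ℕ).empty_notMem h3

private noncomputable def chain {β : Type*} (z : β) (Inv : ℕ → (ℕ → β) → Prop)
    (h0 : Inv 0 fun _ => z)
    (hstep : ∀ k f, Inv k f → ∃ a, Inv (k + 1) (Function.update f k a)) :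
    (k : ℕ) → {f : ℕ → β // Inv k f}
  | 0 => ⟨fun _ => z, h0⟩
  | k + 1 =>
    ⟨Function.update (chain z Inv h0 hstep k).1 k
        (hstep k _ (chain z Inv h0 hstep k).2).choose,
      (hstep k _ (chain z Inv h0 hstep k).2).choose_spec⟩

private lemma chain_lt {β : Type*} (z : β) (Inv : ℕ → (ℕ → β) → Prop)
    (h0 : Inv 0 fun _ => z)
    (hstep : ∀ k f, Inv k f → ∃ a, Inv (k + 1) (Function.update f k a)) :
    ∀ k j, j < k → (chain z Inv h0 hstep k).1 j = (chain z Inv h0 hstep (j + 1)).1 j := by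
  intro k
  induction k with
  | zero => omega
  | succ k ih =>
    intro j hj
    rcases Nat.lt_succ_iff_lt_or_eq.1 hj with hj' | rfl
    · show Function.update (chain z Inv h0 hstep k).1 k _ j = _
      rw [Function.update_of_ne (by omega)]
      exact ih j hj'
    · rfl

private lemma exists_chain {β : Type*} (z : β) (Inv : ℕ → (ℕ → β) → Prop)
    (h0 : Inv 0 fun _ => z)
    (hcongr : ∀ k (f g : ℕ → β), (∀ j, j < k → f j = g j) → Inv k f → Inv k g)
    (hstep : ∀ k f, Inv k f → ∃ a, Inv (k + 1) (Function.update f k a)) :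
    ∃ F : ℕ → β, ∀ k, Inv k F := by
  refine ⟨fun j => (chain z Inv h0 hstep (j + 1)).1 j, fun k => ?_⟩
  exact hcongr k _ _ (fun j hj => chain_lt z Inv h0 hstep k j hj) (chain z Inv h0 hstep k).2

end Stmt16Aux
open Stmt16Aux

theorem stmt_16 :
    ¬ ∃ Y : Submodule ℝ linf, IsClosed (Y : Set linf) ∧ ¬ Module.Finite ℝ Y ∧
      ∀ x ∈ Y, x ≠ 0 →
        (AccPts ⇑x).Finite ∧ ¬ ∃ a : ℝ, Tendsto ⇑x atTop (𝓝 a) := by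
  rintro ⟨Y, hYc, hYinf, h⟩
  classical
  -- Step A: common kernels of finitely many ultrafilter functionals are nontrivial on Y
  have stepA : ∀ (k : ℕ) (U : ℕ → Ultrafilter ℕ),
      ∃ w : linf, w ∈ Y ∧ w ≠ 0 ∧ ∀ j, j < k → lam (U j) w = 0 := by
    intro k U
    by_contra hc
    push_neg at hc
    refine hYinf ?_
    set T : Y →ₗ[ℝ] (Fin k → ℝ) :=
      LinearMap.pi (fun i : Fin k => (lamL (U i)).comp Y.subtype) with hT
    have hTinj : Function.Injective T := by
      rw [← LinearMap.ker_eq_bot, LinearMap.ker_eq_bot']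
      intro m hm
      by_contra hm0
      have hm1 : (m : linf) ≠ 0 := fun h0 => hm0 (Subtype.ext h0)
      obtain ⟨j, hj, hne⟩ := hc (m : linf) m.2 hm1
      have := congrFun hm ⟨j, hj⟩
      exact hne this
    exact Module.Finite.of_injective T hTinj
  -- Step B: nonzero elements of Y stay away from 0 on an infinite set
  have stepB : ∀ w : linf, w ∈ Y → w ≠ 0 → ∃ ε > 0, {n : ℕ | ε ≤ |w n|}.Infinite := by
    intro w hw hw0
    have hnc := (h w hw hw0).2
    have hnt : ¬ Tendsto ⇑w atTop (𝓝 0) := fun ht => hnc ⟨0, ht⟩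
    rw [Metric.tendsto_atTop] at hnt
    push_neg at hnt
    obtain ⟨ε, hε, hfreq⟩ := hnt
    refine ⟨ε, hε, Nat.frequently_atTop_iff_infinite.1 ?_⟩
    rw [frequently_atTop]
    intro N
    obtain ⟨n, hn, hdist⟩ := hfreq N
    exact ⟨n, hn, by simpa [Real.dist_eq] using hdist⟩
  -- the invariant
  set Inv : ℕ → (ℕ → Ultrafilter ℕ × linf × ℝ) → Prop := fun k f => ∀ j, j < k →
      (f j).2.1 ∈ Y ∧
      ‖(f j).2.1‖ ≤ (2 : ℝ)⁻¹ ^ j ∧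
      ((f j).1 : Filter ℕ) ≤ atTop ∧
      (∀ i, i < j → lam ((f i).1) ((f j).2.1) = 0) ∧
      Tendsto ⇑(∑ m ∈ Finset.range (j + 1), (f m).2.1) ((f j).1 : Filter ℕ)
        (𝓝 ((f j).2.2)) ∧
      (∀ i, i < j → (f j).2.2 ≠ (f i).2.2) with hInv
  have h0 : Inv 0 (fun _ => ((Filter.hyperfilter ℕ : Ultrafilter ℕ), (0 : linf), (0 : ℝ))) :=
    fun j hj => absurd hj (Nat.not_lt_zero j)
  have hcongr : ∀ k (f g : ℕ → Ultrafilter ℕ × linf × ℝ),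
      (∀ j, j < k → f j = g j) → Inv k f → Inv k g := by
    intro k f g hfg hf j hj
    obtain ⟨c1, c2, c3, c4, c5, c6⟩ := hf j hj
    have e : g j = f j := (hfg j hj).symm
    refine ⟨by rw [e]; exact c1, by rw [e]; exact c2, by rw [e]; exact c3,
      fun i hi => by rw [e, ← hfg i (by omega)]; exact c4 i hi,
      ?_, fun i hi => by rw [e, (hfg i (by omega)).symm]; exact c6 i hi⟩
    have esum : (∑ m ∈ Finset.range (j + 1), (g m).2.1)
        = ∑ m ∈ Finset.range (j + 1), (f m).2.1 := by
      refine Finset.sum_congr rfl fun m hm => ?_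
      rw [(hfg m (by have := Finset.mem_range.1 hm; omega)).symm]
    rw [e, esum]
    exact c5
  -- the step
  have hstep : ∀ k f, Inv k f → ∃ a, Inv (k + 1) (Function.update f k a) := by
    intro k f hf
    obtain ⟨w', hw'Y, hw'0, hw'ker⟩ := stepA k (fun j => (f j).1)
    obtain ⟨ε, hε, hM⟩ := stepB w' hw'Y hw'0
    have hne : ((𝓟 {n : ℕ | ε ≤ |w' n|} ⊓ atTop) : Filter ℕ).NeBot := by
      have h1 := hM.cofinite_inf_principal_neBot
      rw [Nat.cofinite_eq_atTop] at h1
      rwa [inf_comm]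
    set U := Ultrafilter.of (𝓟 {n : ℕ | ε ≤ |w' n|} ⊓ atTop) with hU
    have hUle : (U : Filter ℕ) ≤ 𝓟 {n : ℕ | ε ≤ |w' n|} ⊓ atTop := Ultrafilter.of_le _
    have hUatTop : (U : Filter ℕ) ≤ atTop := hUle.trans inf_le_right
    have hMU : {n : ℕ | ε ≤ |w' n|} ∈ (U : Filter ℕ) :=
      le_principal_iff.1 (hUle.trans inf_le_left)
    have hb : ε ≤ |lam U w'| :=
      ge_of_tendsto (tendsto_lam U w').abs (eventually_of_mem hMU fun n hn => hn)
    have hb0 : lam U w' ≠ 0 := by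
      intro h0; rw [h0, abs_zero] at hb; linarith
    set s : linf := ∑ m ∈ Finset.range k, (f m).2.1 with hs
    set a := lam U s with ha
    set b := lam U w' with hbdef
    set δ := ((2 : ℝ)⁻¹ ^ k) / (‖w'‖ + 1) with hδdef
    have hδ : 0 < δ := by
      apply div_pos
      · positivity
      · positivity
    have hbad : (Set.Ioc 0 δ \ ((fun j => ((f j).2.2 - a) / b) '' (Set.Iio k))).Nonempty :=
      ((Set.Ioc_infinite hδ).diff ((Set.finite_Iio k).image _)).nonempty
    obtain ⟨t, htmem, htbad⟩ := hbad
    have ht0 : 0 < t := htmem.1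
    have htδ : t ≤ δ := htmem.2
    refine ⟨(U, t • w', a + t * b), ?_⟩
    intro j hj
    have hupd : ∀ i, i < k → Function.update f k (U, t • w', a + t * b) i = f i :=
      fun i hi => Function.update_of_ne (by omega) _ f
    rcases Nat.lt_succ_iff_lt_or_eq.1 hj with hj' | rfl
    · obtain ⟨c1, c2, c3, c4, c5, c6⟩ := hf j hj'
      have e : Function.update f k (U, t • w', a + t * b) j = f j := hupd j hj'
      refine ⟨by rw [e]; exact c1, by rw [e]; exact c2, by rw [e]; exact c3,
        fun i hi => by rw [e, hupd i (by omega)]; exact c4 i hi, ?_,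
        fun i hi => by rw [e, hupd i (by omega)]; exact c6 i hi⟩
      have esum : (∑ m ∈ Finset.range (j + 1),
          (Function.update f k (U, t • w', a + t * b) m).2.1)
          = ∑ m ∈ Finset.range (j + 1), (f m).2.1 := by
        refine Finset.sum_congr rfl fun m hm => ?_
        rw [hupd m (by have := Finset.mem_range.1 hm; omega)]
      rw [e, esum]
      exact c5
    · have e : Function.update f j (U, t • w', a + t * b) j = (U, t • w', a + t * b) :=
        Function.update_self _ _ _
      refine ⟨?_, ?_, ?_, ?_, ?_, ?_⟩
      · rw [e]; exact Y.smul_mem t hw'Y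
      · rw [e]
        show ‖t • w'‖ ≤ (2 : ℝ)⁻¹ ^ j
        rw [norm_smul, Real.norm_eq_abs, abs_of_pos ht0]
        calc t * ‖w'‖ ≤ δ * (‖w'‖ + 1) := by
              apply mul_le_mul htδ (by linarith) (norm_nonneg _) (le_of_lt hδ)
          _ = (2 : ℝ)⁻¹ ^ j := by
              rw [hδdef]
              exact div_mul_cancel₀ _ (by positivity)
      · rw [e]; exact hUatTop
      · intro i hi
        rw [e, hupd i hi]
        show lam ((f i).1) (t • w') = 0
        rw [lam_smul, hw'ker i hi, mul_zero]
      · rw [e]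
        have esum : (∑ m ∈ Finset.range (j + 1),
            (Function.update f j (U, t • w', a + t * b) m).2.1) = s + t • w' := by
          rw [Finset.sum_range_succ, e]
          congr 1
          refine Finset.sum_congr rfl fun m hm => ?_
          rw [hupd m (Finset.mem_range.1 hm)]
        rw [esum]
        have htd : Tendsto ⇑(s + t • w') (U : Filter ℕ) (𝓝 (a + t * b)) := by
          rw [lp.coeFn_add, lp.coeFn_smul]
          have h1 : Tendsto ⇑s (U : Filter ℕ) (𝓝 a) := tendsto_lam U s
          have h2 : Tendsto (t • ⇑w') (U : Filter ℕ) (𝓝 (t * b)) := by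
            have := (tendsto_lam U w').const_smul t
            exact this
          exact h1.add h2
        exact htd
      · intro i hi
        rw [e, hupd i hi]
        show a + t * b ≠ (f i).2.2
        intro heq
        refine htbad ⟨i, hi, ?_⟩
        show ((f i).2.2 - a) / b = t
        rw [← heq, add_sub_cancel_left]
        exact mul_div_cancel_right₀ t hb0
  obtain ⟨F, hF⟩ := exists_chain _ Inv h0 hcongr hstep
  have hFj : ∀ j, (F j).2.1 ∈ Y ∧ ‖(F j).2.1‖ ≤ (2 : ℝ)⁻¹ ^ j ∧
      ((F j).1 : Filter ℕ) ≤ atTop ∧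
      (∀ i, i < j → lam ((F i).1) ((F j).2.1) = 0) ∧
      Tendsto ⇑(∑ m ∈ Finset.range (j + 1), (F m).2.1) ((F j).1 : Filter ℕ)
        (𝓝 ((F j).2.2)) ∧
      (∀ i, i < j → (F j).2.2 ≠ (F i).2.2) :=
    fun j => hF (j + 1) j (Nat.lt_succ_self j)
  -- the series
  have hsummable : Summable (fun j => (F j).2.1) := by
    refine Summable.of_norm_bounded (g := fun j => (2 : ℝ)⁻¹ ^ j) ?_ (fun j => (hFj j).2.1)
    exact summable_geometric_of_lt_one (by norm_num) (by norm_num)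
  set y : linf := ∑' j, (F j).2.1 with hy
  have htend : Tendsto (fun k => ∑ m ∈ Finset.range k, (F m).2.1) atTop (𝓝 y) :=
    hsummable.hasSum.tendsto_sum_nat
  have hyY : y ∈ Y := by
    refine hYc.mem_of_tendsto htend (Eventually.of_forall fun k => ?_)
    exact Submodule.sum_mem Y fun m _ => (hFj m).1
  -- lam (F j).1 y = (F j).2.2
  have hlamy : ∀ j, lam ((F j).1) y = (F j).2.2 := by
    intro j
    have hconst : ∀ m, j + 1 ≤ m → lam ((F j).1) (∑ i ∈ Finset.range m, (F i).2.1) = (F j).2.2 := by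
      intro m hm
      induction m with
      | zero => omega
      | succ m ih =>
        rcases Nat.lt_or_ge (j + 1) (m + 1) with hlt | hge
        · have hjm : j < m := by omega
          rw [Finset.sum_range_succ, lam_add, ih (by omega), (hFj m).2.2.2.1 j hjm, add_zero]
        · have : m = j := by omega
          subst this
          exact lam_eq (hFj m).2.2.2.2.1
    have h2 : Tendsto (fun m => lam ((F j).1) (∑ i ∈ Finset.range m, (F i).2.1)) atTop
        (𝓝 (lam ((F j).1) y)) := by
      rw [tendsto_iff_dist_tendsto_zero]
      refine squeeze_zero (fun m => dist_nonneg) (fun m => ?_)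
        (tendsto_iff_dist_tendsto_zero.1 htend)
      rw [Real.dist_eq, dist_eq_norm]
      exact abs_lam_sub_le _ _ _
    have h3 : Tendsto (fun m => lam ((F j).1) (∑ i ∈ Finset.range m, (F i).2.1)) atTop
        (𝓝 ((F j).2.2)) := by
      refine Tendsto.congr' ?_
        (tendsto_const_nhds : Tendsto (fun _ : ℕ => (F j).2.2) atTop (𝓝 ((F j).2.2)))
      filter_upwards [eventually_ge_atTop (j + 1)] with m hm
      exact (hconst m hm).symm
    exact tendsto_nhds_unique h2 h3
  have hvmem : ∀ j, (F j).2.2 ∈ AccPts ⇑y := by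
    intro j
    have := mem_accPts (hFj j).2.2.1 y
    rwa [hlamy j] at this
  have hvinj : Function.Injective (fun j => (F j).2.2) := by
    intro i j hij
    by_contra hne
    rcases Nat.lt_or_ge i j with hlt | hge
    · exact (hFj j).2.2.2.2.2 i hlt hij.symm
    · have hlt : j < i := by omega
      exact (hFj i).2.2.2.2.2 j hlt hij
  have hy0 : y ≠ 0 := by
    intro h0
    have h1 : (F 0).2.2 = 0 := by rw [← hlamy 0, h0, lam_zero]
    have h2 : (F 1).2.2 = 0 := by rw [← hlamy 1, h0, lam_zero]
    exact (hFj 1).2.2.2.2.2 0 (by omega) (h2.trans h1.symm)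
  have hinfinite : (AccPts ⇑y).Infinite :=
    Set.infinite_of_injective_forall_mem hvinj hvmem
  exact hinfinite ((h y hyY hy0).1)
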